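/- (Lemma 1, general multilayer case.) Let m ≥ 1 and p₀, …, p_m be positive integers, with p₀ = n. For each i ∈ {1,…,m}, let A_i be a real p_i × p_{i-1} matrix and b_i ∈ ℝ^{p_i}; let c ∈ ℝ^{p_m}. Define recursively x₀(x) = x, z_i(x) = A_i x_{i-1}(x) + b_i, x_i(x) = ReLU(z_i(x)) coordinatewise, and F(x) = ⟨c, x_m(x)⟩. Let ‖·‖ be a norm on ℝⁿ with dual norm ‖·‖_*, let Ω ⊆ ℝⁿ be convex, and let L ∈ ℝ be such that for every x ∈ Ω and every choice of vectors u_i ∈ ℝ^{p_i} with (u_i)ⱼ ∈ G((z_i(x))ⱼ) for all i ∈ {1,…,m} and all coordinates j, one has ‖A₁ᵀ diag(u₁) A₂ᵀ diag(u₂) ⋯ A_mᵀ diag(u_m) c‖_* ≤ L. Then for all x, y ∈ Ω, |F(y) - F(x)| ≤ L · ‖y - x‖. -/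

import Mathlib

open Matrix

/-- The ReLU function. -/
noncomputable def ReLU (x : ℝ) : ℝ := max 0 x

/-- The generalized derivative of ReLU: `G(x) = {1}` for `x > 0`, `{0}` for `x < 0`,
and `{0, 1}` for `x = 0`. -/
noncomputable def G (x : ℝ) : Set ℝ :=
  if 0 < x then {1} else if x < 0 then {0} else {0, 1}

/-- The dual norm of a norm `N` on `ℝⁿ`:
`‖v‖_* = sup { |⟨t, v⟩| : N t ≤ 1 }`. -/
noncomputable def dualNorm (n : ℕ) (N : (Fin n → ℝ) → ℝ) (v : Fin n → ℝ) : ℝ :=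
  sSup {r : ℝ | ∃ t : Fin n → ℝ, N t ≤ 1 ∧ r = |∑ i, t i * v i|}

/-- The activation vectors of a multilayer ReLU network:
`x₀(x) = x` and `x_{i+1}(x) = ReLU(A_{i+1} x_i(x) + b_{i+1})` coordinatewise
(with the weight of layer `i+1` indexed here by `A i`). -/
noncomputable def layerOut (p : ℕ → ℕ)
    (A : ∀ i : ℕ, Matrix (Fin (p (i + 1))) (Fin (p i)) ℝ)
    (b : ∀ i : ℕ, Fin (p (i + 1)) → ℝ) (x : Fin (p 0) → ℝ) :
    (i : ℕ) → Fin (p i) → ℝ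
  | 0 => x
  | i + 1 => fun j => ReLU (((A i).mulVec (layerOut p A b x i) + b i) j)

/-- `pullback p A u i v = A₁ᵀ diag(u₁) ⋯ A_iᵀ diag(u_i) v` (with the weight of
layer `i+1` indexed here by `A i`, and similarly for `u`). -/
noncomputable def pullback (p : ℕ → ℕ)
    (A : ∀ i : ℕ, Matrix (Fin (p (i + 1))) (Fin (p i)) ℝ)
    (u : ∀ i : ℕ, Fin (p (i + 1)) → ℝ) :
    (i : ℕ) → (Fin (p i) → ℝ) → (Fin (p 0) → ℝ)
  | 0 => fun v => v
  | i + 1 => fun v => pullback p A u i (((A i)ᵀ * Matrix.diagonal (u i)).mulVec v)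

section NormFacts

variable {n : ℕ} {N : (Fin n → ℝ) → ℝ}

lemma N_zero (Nsmul : ∀ (r : ℝ) (a : Fin n → ℝ), N (r • a) = |r| * N a) : N 0 = 0 := by
  have := Nsmul 0 0
  simpa using this

lemma N_neg (Nsmul : ∀ (r : ℝ) (a : Fin n → ℝ), N (r • a) = |r| * N a) (a : Fin n → ℝ) :
    N (-a) = N a := by
  have := Nsmul (-1) a
  simpa using this

lemma N_nonneg (Nadd : ∀ a b : Fin n → ℝ, N (a + b) ≤ N a + N b)
    (Nsmul : ∀ (r : ℝ) (a : Fin n → ℝ), N (r • a) = |r| * N a) (a : Fin n → ℝ) :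
    0 ≤ N a := by
  have h1 : N (a + (-a)) ≤ N a + N (-a) := Nadd a (-a)
  rw [add_neg_cancel, N_zero Nsmul, N_neg Nsmul] at h1
  linarith

lemma N_sum (Nadd : ∀ a b : Fin n → ℝ, N (a + b) ≤ N a + N b)
    (Nsmul : ∀ (r : ℝ) (a : Fin n → ℝ), N (r • a) = |r| * N a)
    {ι : Type*} (s : Finset ι) (f : ι → Fin n → ℝ) :
    N (∑ i ∈ s, f i) ≤ ∑ i ∈ s, N (f i) := by
  classical
  induction s using Finset.induction with
  | empty => simp [N_zero Nsmul]
  | @insert a s h ih =>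
      rw [Finset.sum_insert h, Finset.sum_insert h]
      exact le_trans (Nadd _ _) (by linarith)

lemma N_le_sum (Nadd : ∀ a b : Fin n → ℝ, N (a + b) ≤ N a + N b)
    (Nsmul : ∀ (r : ℝ) (a : Fin n → ℝ), N (r • a) = |r| * N a) (a : Fin n → ℝ) :
    N a ≤ ∑ i, |a i| * N (Pi.single i 1) := by
  have ha : a = ∑ i, (a i) • (Pi.single i 1 : Fin n → ℝ) := by
    ext j
    simp [Pi.single_apply]
  calc N a = N (∑ i, (a i) • (Pi.single i 1 : Fin n → ℝ)) := by rw [← ha]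
    _ ≤ ∑ i, N ((a i) • (Pi.single i 1 : Fin n → ℝ)) := N_sum Nadd Nsmul _ _
    _ = ∑ i, |a i| * N (Pi.single i 1) := by simp [Nsmul]

lemma N_continuous (Nadd : ∀ a b : Fin n → ℝ, N (a + b) ≤ N a + N b)
    (Nsmul : ∀ (r : ℝ) (a : Fin n → ℝ), N (r • a) = |r| * N a) :
    Continuous N := by
  set C : ℝ := ∑ i, N (Pi.single i 1) with hC
  have hC0 : 0 ≤ C := Finset.sum_nonneg fun i _ => N_nonneg Nadd Nsmul _
  have key : ∀ a b : Fin n → ℝ, N a - N b ≤ C * ‖a - b‖ := by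
    intro a b
    have h1 : N a ≤ N b + N (a - b) := by
      have := Nadd b (a - b)
      rwa [add_sub_cancel] at this
    have h2 : N (a - b) ≤ ∑ i, |(a - b) i| * N (Pi.single i 1) :=
      N_le_sum Nadd Nsmul _
    have h3 : ∑ i, |(a - b) i| * N (Pi.single i 1) ≤ ∑ i, ‖a - b‖ * N (Pi.single i 1) := by
      apply Finset.sum_le_sum
      intro i _
      exact mul_le_mul_of_nonneg_right
        (by simpa using norm_le_pi_norm (a - b) i) (N_nonneg Nadd Nsmul _)
    have h4 : ∑ i, ‖a - b‖ * N (Pi.single i 1) = C * ‖a - b‖ := by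
      rw [← Finset.mul_sum, mul_comm]
    linarith
  have lip : LipschitzWith (Real.toNNReal C) N := by
    apply LipschitzWith.of_dist_le_mul
    intro a b
    rw [Real.dist_eq, dist_eq_norm, Real.coe_toNNReal C hC0]
    rcases abs_cases (N a - N b) with ⟨h, _⟩ | ⟨h, _⟩
    · rw [h]; exact key a b
    · rw [h]
      have := key b a
      rw [← norm_neg (b - a)] at this
      simpa [neg_sub] using this
  exact lip.continuous

lemma N_lower (hn : 0 < n) (Nadd : ∀ a b : Fin n → ℝ, N (a + b) ≤ N a + N b)
    (Nsmul : ∀ (r : ℝ) (a : Fin n → ℝ), N (r • a) = |r| * N a)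
    (Ndef : ∀ a : Fin n → ℝ, N a = 0 → a = 0) :
    ∃ ε : ℝ, 0 < ε ∧ ∀ t : Fin n → ℝ, ε * ‖t‖ ≤ N t := by
  have hne : Nonempty (Fin n) := ⟨⟨0, hn⟩⟩
  have hsne : (Metric.sphere (0 : Fin n → ℝ) 1).Nonempty := by
    refine ⟨fun _ => 1, ?_⟩
    have : ‖(fun _ : Fin n => (1:ℝ))‖ = 1 := by simp [pi_norm_const]
    simpa [Metric.mem_sphere] using this
  obtain ⟨t₀, ht₀s, ht₀⟩ := (isCompact_sphere (0 : Fin n → ℝ) 1).exists_isMinOn hsne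
    ((N_continuous Nadd Nsmul).continuousOn)
  have ht₀n : ‖t₀‖ = 1 := by simpa using ht₀s
  have hε : 0 < N t₀ := by
    rcases lt_or_eq_of_le (N_nonneg Nadd Nsmul t₀) with h | h
    · exact h
    · exfalso
      have : t₀ = 0 := Ndef t₀ h.symm
      rw [this] at ht₀n
      simp at ht₀n
  refine ⟨N t₀, hε, fun t => ?_⟩
  rcases eq_or_ne t 0 with rfl | ht
  · simp [N_zero Nsmul]
  · have htn : 0 < ‖t‖ := norm_pos_iff.2 ht
    have hmem : ‖t‖⁻¹ • t ∈ Metric.sphere (0 : Fin n → ℝ) 1 := by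
      simp [norm_smul, abs_of_pos (inv_pos.2 htn), inv_mul_cancel₀ htn.ne']
    have h1 : N t₀ ≤ N (‖t‖⁻¹ • t) := ht₀ hmem
    have h2 : N (‖t‖⁻¹ • t) = ‖t‖⁻¹ * N t := by
      rw [Nsmul]
      congr 1
      exact abs_of_pos (inv_pos.2 htn)
    rw [h2] at h1
    calc N t₀ * ‖t‖ ≤ (‖t‖⁻¹ * N t) * ‖t‖ := by
          exact mul_le_mul_of_nonneg_right h1 (le_of_lt htn)
      _ = N t := by field_simp

lemma pairing (hn : 0 < n) (Nadd : ∀ a b : Fin n → ℝ, N (a + b) ≤ N a + N b)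
    (Nsmul : ∀ (r : ℝ) (a : Fin n → ℝ), N (r • a) = |r| * N a)
    (Ndef : ∀ a : Fin n → ℝ, N a = 0 → a = 0) (v t0 : Fin n → ℝ) :
    |∑ i, t0 i * v i| ≤ dualNorm n N v * N t0 := by
  obtain ⟨ε, hε, hlow⟩ := N_lower hn Nadd Nsmul Ndef
  have hBdd : BddAbove {r : ℝ | ∃ t : Fin n → ℝ, N t ≤ 1 ∧ r = |∑ i, t i * v i|} := by
    refine ⟨ε⁻¹ * ∑ i, |v i|, ?_⟩
    rintro r ⟨t, ht, rfl⟩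
    have htn : ‖t‖ ≤ ε⁻¹ := by
      have h1 : ε * ‖t‖ ≤ 1 := le_trans (hlow t) ht
      rw [← one_div]
      rw [le_div_iff₀ hε]
      linarith [mul_comm ε ‖t‖]
    calc |∑ i, t i * v i| ≤ ∑ i, |t i * v i| := Finset.abs_sum_le_sum_abs _ _
      _ = ∑ i, |t i| * |v i| := by simp [abs_mul]
      _ ≤ ∑ i, ε⁻¹ * |v i| := by
          apply Finset.sum_le_sum
          intro i _
          exact mul_le_mul_of_nonneg_right
            (le_trans (by simpa using norm_le_pi_norm t i) htn) (abs_nonneg _)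
      _ = ε⁻¹ * ∑ i, |v i| := by rw [Finset.mul_sum]
  rcases eq_or_ne (N t0) 0 with h0 | h0
  · have : t0 = 0 := Ndef t0 h0
    subst this
    simp [h0]
  · have hpos : 0 < N t0 := lt_of_le_of_ne (N_nonneg Nadd Nsmul t0) (Ne.symm h0)
    set t : Fin n → ℝ := (N t0)⁻¹ • t0 with htdef
    have hNt : N t ≤ 1 := by
      rw [htdef, Nsmul, abs_of_pos (inv_pos.2 hpos), inv_mul_cancel₀ h0]
    have hmem : |∑ i, t i * v i| ∈
        {r : ℝ | ∃ t : Fin n → ℝ, N t ≤ 1 ∧ r = |∑ i, t i * v i|} := ⟨t, hNt, rfl⟩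
    have hle : |∑ i, t i * v i| ≤ dualNorm n N v := le_csSup hBdd hmem
    have heq : |∑ i, t i * v i| = (N t0)⁻¹ * |∑ i, t0 i * v i| := by
      rw [← abs_of_pos (inv_pos.2 hpos), ← abs_mul]
      congr 1
      rw [Finset.mul_sum]
      apply Finset.sum_congr rfl
      intro i _
      simp [htdef]
      ring
    rw [heq] at hle
    calc |∑ i, t0 i * v i| = N t0 * ((N t0)⁻¹ * |∑ i, t0 i * v i|) := by
          field_simp
      _ ≤ N t0 * dualNorm n N v := mul_le_mul_of_nonneg_left hle hpos.le
      _ = dualNorm n N v * N t0 := mul_comm _ _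

end NormFacts

lemma one_mem_G {x : ℝ} (h : 0 < x) : (1:ℝ) ∈ G x := by simp [G, h]

lemma zero_mem_G {x : ℝ} (h : x ≤ 0) : (0:ℝ) ∈ G x := by
  rcases lt_or_eq_of_le h with h | h
  · simp [G, h, not_lt.2 h.le]
  · simp [G, h]

lemma relu_pos {x : ℝ} (h : 0 ≤ x) : ReLU x = x := max_eq_right h
lemma relu_neg {x : ℝ} (h : x ≤ 0) : ReLU x = 0 := max_eq_left h

lemma relu_local (a β δ : ℝ) (hδ : 0 < δ) :
    ∃ δ', 0 < δ' ∧ δ' ≤ δ ∧ ∃ u : ℝ,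
      (∀ s : ℝ, 0 ≤ s → s ≤ δ' → ReLU (a + s * β) = ReLU a + s * (u * β)) ∧
      (∀ s : ℝ, 0 < s → s < δ' → u ∈ G (a + s * β)) := by
  have hβ : (0:ℝ) < |β| + 1 := by positivity
  rcases lt_trichotomy a 0 with ha | ha | ha
  · refine ⟨min δ (-a / (|β| + 1)), lt_min hδ (div_pos (by linarith) hβ), min_le_left _ _, 0, ?_, ?_⟩
    · intro s h0 h1
      have hs : s ≤ -a / (|β| + 1) := le_trans h1 (min_le_right _ _)
      have hsb : s * β ≤ s * |β| := mul_le_mul_of_nonneg_left (le_abs_self β) h0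
      have h2 : s * |β| ≤ (-a / (|β| + 1)) * |β| :=
        mul_le_mul_of_nonneg_right hs (abs_nonneg β)
      have h3 : a + s * β < 0 := by
        have : (-a / (|β| + 1)) * |β| < -a := by
          rw [div_mul_eq_mul_div, div_lt_iff₀ hβ]
          nlinarith [abs_nonneg β]
        linarith
      rw [relu_neg h3.le, relu_neg ha.le]
      ring
    · intro s h0 h1
      have hs : s ≤ -a / (|β| + 1) := le_trans h1.le (min_le_right _ _)
      have hsb : s * β ≤ s * |β| := mul_le_mul_of_nonneg_left (le_abs_self β) h0.le
      have h2 : s * |β| ≤ (-a / (|β| + 1)) * |β| :=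
        mul_le_mul_of_nonneg_right hs (abs_nonneg β)
      have h3 : a + s * β < 0 := by
        have : (-a / (|β| + 1)) * |β| < -a := by
          rw [div_mul_eq_mul_div, div_lt_iff₀ hβ]
          nlinarith [abs_nonneg β]
        linarith
      exact zero_mem_G h3.le
  · subst ha
    rcases le_or_gt β 0 with hb | hb
    · refine ⟨δ, hδ, le_rfl, 0, ?_, ?_⟩
      · intro s h0 h1
        have : s * β ≤ 0 := mul_nonpos_of_nonneg_of_nonpos h0 hb
        rw [relu_neg (by linarith), relu_neg le_rfl]
        ring
      · intro s h0 h1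
        have : s * β ≤ 0 := mul_nonpos_of_nonneg_of_nonpos h0.le hb
        exact zero_mem_G (by linarith)
    · refine ⟨δ, hδ, le_rfl, 1, ?_, ?_⟩
      · intro s h0 h1
        have : 0 ≤ s * β := mul_nonneg h0 hb.le
        rw [relu_pos (by linarith), relu_pos le_rfl]
        ring
      · intro s h0 h1
        have : 0 < s * β := mul_pos h0 hb
        exact one_mem_G (by linarith)
  · refine ⟨min δ (a / (|β| + 1)), lt_min hδ (by positivity), min_le_left _ _, 1, ?_, ?_⟩
    · intro s h0 h1
      have hs : s ≤ a / (|β| + 1) := le_trans h1 (min_le_right _ _)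
      have hsb : -(s * |β|) ≤ s * β := by
        have := mul_le_mul_of_nonneg_left (neg_abs_le β) h0
        linarith
      have h2 : s * |β| ≤ (a / (|β| + 1)) * |β| :=
        mul_le_mul_of_nonneg_right hs (abs_nonneg β)
      have h3 : 0 < a + s * β := by
        have : (a / (|β| + 1)) * |β| < a := by
          rw [div_mul_eq_mul_div, div_lt_iff₀ hβ]
          nlinarith [abs_nonneg β]
        linarith
      rw [relu_pos h3.le, relu_pos ha.le]
      ring
    · intro s h0 h1
      have hs : s ≤ a / (|β| + 1) := le_trans h1.le (min_le_right _ _)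
      have hsb : -(s * |β|) ≤ s * β := by
        have := mul_le_mul_of_nonneg_left (neg_abs_le β) h0.le
        linarith
      have h2 : s * |β| ≤ (a / (|β| + 1)) * |β| :=
        mul_le_mul_of_nonneg_right hs (abs_nonneg β)
      have h3 : 0 < a + s * β := by
        have : (a / (|β| + 1)) * |β| < a := by
          rw [div_mul_eq_mul_div, div_lt_iff₀ hβ]
          nlinarith [abs_nonneg β]
        linarith
      exact one_mem_G h3

lemma relu_continuous : Continuous ReLU := continuous_const.max continuous_id

lemma layerOut_continuous (p : ℕ → ℕ)
    (A : ∀ i : ℕ, Matrix (Fin (p (i + 1))) (Fin (p i)) ℝ)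
    (b : ∀ i : ℕ, Fin (p (i + 1)) → ℝ) :
    ∀ i, Continuous fun x => layerOut p A b x i := by
  intro i
  induction i with
  | zero => exact continuous_id
  | succ i ih =>
      apply continuous_pi
      intro j
      apply relu_continuous.comp
      simp only [Pi.add_apply, Matrix.mulVec, dotProduct]
      exact (continuous_finset_sum _ fun k _ =>
        continuous_const.mul ((continuous_apply k).comp ih)).add continuous_const

lemma pullback_congr (p : ℕ → ℕ)
    (A : ∀ i : ℕ, Matrix (Fin (p (i + 1))) (Fin (p i)) ℝ)
    (u u' : ∀ i : ℕ, Fin (p (i + 1)) → ℝ) :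
    ∀ i, (∀ k, k < i → u k = u' k) → ∀ v, pullback p A u i v = pullback p A u' i v := by
  intro i
  induction i with
  | zero => intro _ v; rfl
  | succ i ih =>
      intro h v
      show pullback p A u i _ = pullback p A u' i _
      rw [h i (Nat.lt_succ_self i)]
      exact ih (fun k hk => h k (hk.trans (Nat.lt_succ_self i))) _

lemma transpose_dot {q r : ℕ} (B : Matrix (Fin q) (Fin r) ℝ) (v : Fin q → ℝ) (w : Fin r → ℝ) :
    (Bᵀ.mulVec v) ⬝ᵥ w = v ⬝ᵥ (B.mulVec w) := by
  rw [Matrix.mulVec_transpose, ← Matrix.dotProduct_mulVec]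

/-- Lemma 1, general multilayer case: for an `m`-hidden-layer ReLU network
`F(x) = ⟨c, x_m(x)⟩`, if `‖A₁ᵀ diag(u₁) ⋯ A_mᵀ diag(u_m) c‖_* ≤ L` for every
`x ∈ Ω` and every admissible family `u` with `(u_i)ⱼ ∈ G((z_i(x))ⱼ)`, then `L`
is a Lipschitz constant for `F` on the convex set `Ω` w.r.t. the norm `N`. -/
theorem multilayer_lipschitz_bound (m : ℕ) (hm : 1 ≤ m)
    (p : ℕ → ℕ) (hp : ∀ i ≤ m, 0 < p i)
    (A : ∀ i : ℕ, Matrix (Fin (p (i + 1))) (Fin (p i)) ℝ)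
    (b : ∀ i : ℕ, Fin (p (i + 1)) → ℝ)
    (c : Fin (p m) → ℝ)
    (N : (Fin (p 0) → ℝ) → ℝ)
    (Nadd : ∀ a b : Fin (p 0) → ℝ, N (a + b) ≤ N a + N b)
    (Nsmul : ∀ (r : ℝ) (a : Fin (p 0) → ℝ), N (r • a) = |r| * N a)
    (Ndef : ∀ a : Fin (p 0) → ℝ, N a = 0 → a = 0)
    (F : (Fin (p 0) → ℝ) → ℝ)
    (hF : ∀ x, F x = ∑ j, c j * layerOut p A b x m j)
    (Ω : Set (Fin (p 0) → ℝ)) (hΩ : Convex ℝ Ω) (L : ℝ)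
    (hL : ∀ x ∈ Ω, ∀ u : ∀ i : ℕ, Fin (p (i + 1)) → ℝ,
      (∀ i < m, ∀ j, u i j ∈ G (((A i).mulVec (layerOut p A b x i) + b i) j)) →
      dualNorm (p 0) N (pullback p A u m c) ≤ L) :
    ∀ x ∈ Ω, ∀ y ∈ Ω, |F y - F x| ≤ L * N (y - x) := by
  intro x hx y hy
  set d : Fin (p 0) → ℝ := y - x with hd
  set γ : ℝ → (Fin (p 0) → ℝ) := fun s => x + s • d with hγ
  -- Key: local affineness of layerOut along the segment, with admissible u
  have key : ∀ i, i ≤ m → ∀ t : ℝ, 0 ≤ t → t < 1 →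
      ∃ δ : ℝ, 0 < δ ∧ t + δ ≤ 1 ∧
        ∃ (u : ∀ k : ℕ, Fin (p (k + 1)) → ℝ) (w : Fin (p i) → ℝ),
        (∀ s : ℝ, t ≤ s → s ≤ t + δ →
          layerOut p A b (γ s) i = layerOut p A b (γ t) i + (s - t) • w) ∧
        (∀ s : ℝ, t < s → s < t + δ → ∀ k, k < i → ∀ j,
          u k j ∈ G (((A k).mulVec (layerOut p A b (γ s) k) + b k) j)) ∧
        (∀ v : Fin (p i) → ℝ, ∑ j, pullback p A u i v j * d j = ∑ j, v j * w j) := by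
    intro i
    induction i with
    | zero =>
        intro _ t ht0 ht1
        refine ⟨1 - t, by linarith, by linarith, fun _ _ => 0, d, ?_, ?_, fun v => rfl⟩
        · intro s _ _
          show γ s = γ t + (s - t) • d
          ext j
          simp only [hγ, Pi.add_apply, Pi.smul_apply, smul_eq_mul]
          ring
        · intro _ _ _ k hk
          exact absurd hk (Nat.not_lt_zero k)
    | succ i ih =>
        intro hi t ht0 ht1
        obtain ⟨δ, hδ, hδ1, u, w, haff, hadm, hdot⟩ := ih (Nat.le_of_succ_le hi) t ht0 ht1
        set z0 : Fin (p (i + 1)) → ℝ := (A i).mulVec (layerOut p A b (γ t) i) + b i with hz0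
        set β : Fin (p (i + 1)) → ℝ := (A i).mulVec w with hβ
        have H : ∀ j : Fin (p (i + 1)), ∃ δ', 0 < δ' ∧ δ' ≤ δ ∧ ∃ u0 : ℝ,
            (∀ s : ℝ, 0 ≤ s → s ≤ δ' → ReLU (z0 j + s * β j) = ReLU (z0 j) + s * (u0 * β j)) ∧
            (∀ s : ℝ, 0 < s → s < δ' → u0 ∈ G (z0 j + s * β j)) :=
          fun j => relu_local (z0 j) (β j) δ hδ
        choose δf hδf1 hδf2 uf huf1 huf2 using H
        haveI hne : Nonempty (Fin (p (i + 1))) := ⟨⟨0, hp (i + 1) hi⟩⟩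
        set δ' : ℝ := Finset.univ.inf' Finset.univ_nonempty δf with hδ'def
        have hδ'pos : 0 < δ' := by
          rw [hδ'def, Finset.lt_inf'_iff]
          exact fun j _ => hδf1 j
        have hδ'le : ∀ j, δ' ≤ δf j := fun j => Finset.inf'_le _ (Finset.mem_univ j)
        have hδ'δ : δ' ≤ δ := le_trans (hδ'le (Classical.arbitrary _)) (hδf2 _)
        -- the argument of ReLU along the segment
        have hz : ∀ s : ℝ, t ≤ s → s ≤ t + δ →
            (A i).mulVec (layerOut p A b (γ s) i) + b i =
              fun j => z0 j + (s - t) * β j := by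
          intro s h1 h2
          rw [haff s h1 h2]
          ext j
          simp only [hz0, hβ, Matrix.mulVec_add, Matrix.mulVec_smul,
            Pi.add_apply, Pi.smul_apply, smul_eq_mul]
          ring
        refine ⟨δ', hδ'pos, by linarith, Function.update u i uf,
          fun j => uf j * β j, ?_, ?_, ?_⟩
        · -- affineness
          intro s h1 h2
          ext j
          show ReLU (((A i).mulVec (layerOut p A b (γ s) i) + b i) j)
            = ReLU (((A i).mulVec (layerOut p A b (γ t) i) + b i) j)
              + (s - t) • (uf j * β j)
          rw [hz s h1 (by linarith)]
          have h3 := huf1 j (s - t) (by linarith) (by linarith [hδ'le j])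
          simp only [smul_eq_mul]
          rw [h3]
        · -- admissibility
          intro s h1 h2 k hk j
          rcases Nat.lt_succ_iff_lt_or_eq.1 hk with hk' | rfl
          · rw [Function.update_of_ne (Nat.ne_of_lt hk')]
            exact hadm s h1 (by linarith) k hk' j
          · rw [Function.update_self]
            have := huf2 j (s - t) (by linarith) (by linarith [hδ'le j])
            have harg := congrFun (hz s h1.le (by linarith)) j
            rw [harg]
            exact this
        · -- pullback identity
          intro v
          show ∑ j, pullback p A (Function.update u i uf) i
              (((A i)ᵀ * Matrix.diagonal (Function.update u i uf i)).mulVec v) j * d j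
            = ∑ j, v j * (uf j * β j)
          rw [Function.update_self]
          rw [pullback_congr p A (Function.update u i uf) u i
            (fun k hk => Function.update_of_ne (Nat.ne_of_lt hk) _ _) _]
          rw [hdot]
          have : (((A i)ᵀ * Matrix.diagonal uf).mulVec v) ⬝ᵥ w
              = v ⬝ᵥ fun j => uf j * β j := by
            rw [← Matrix.mulVec_mulVec, transpose_dot]
            show (Matrix.diagonal uf).mulVec v ⬝ᵥ (A i).mulVec w = _
            simp only [dotProduct, Matrix.mulVec_diagonal, hβ]
            apply Finset.sum_congr rfl
            intro j _
            ring
          exact this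
  -- define g and its one-sided affine structure
  set g : ℝ → ℝ := fun s => ∑ j, c j * layerOut p A b (γ s) m j with hg
  have key2 : ∀ t : ℝ, ∃ sl : ℝ, (0 ≤ t ∧ t < 1) →
      (|sl| ≤ L * N d ∧ ∃ δ : ℝ, 0 < δ ∧
        ∀ s : ℝ, t ≤ s → s ≤ t + δ → g s = g t + (s - t) * sl) := by
    intro t
    by_cases ht : 0 ≤ t ∧ t < 1
    · obtain ⟨δ, hδ, hδ1, u, w, haff, hadm, hdot⟩ := key m le_rfl t ht.1 ht.2
      refine ⟨∑ j, c j * w j, fun _ => ⟨?_, δ, hδ, ?_⟩⟩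
      · -- slope bound
        set s' : ℝ := t + δ / 2 with hs'
        have hs1 : t < s' := by rw [hs']; linarith
        have hs2 : s' < t + δ := by rw [hs']; linarith
        have hmem : γ s' ∈ Ω := by
          have h01 : 0 ≤ s' := by linarith
          have h02 : s' ≤ 1 := by linarith
          have : γ s' = (1 - s') • x + s' • y := by
            ext j
            simp only [hγ, hd, Pi.add_apply, Pi.smul_apply, Pi.sub_apply, smul_eq_mul]
            ring
          rw [this]
          exact hΩ hx hy (by linarith) h01 (by ring)
        have hdual : dualNorm (p 0) N (pullback p A u m c) ≤ L :=
          hL (γ s') hmem u (fun k hk j => hadm s' hs1 hs2 k hk j)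
        have heq : ∑ j, c j * w j = ∑ j, d j * pullback p A u m c j := by
          rw [← hdot c]
          apply Finset.sum_congr rfl
          intro j _
          ring
        rw [heq]
        calc |∑ j, d j * pullback p A u m c j|
            ≤ dualNorm (p 0) N (pullback p A u m c) * N d :=
              pairing (hp 0 (Nat.zero_le m)) Nadd Nsmul Ndef _ _
          _ ≤ L * N d := mul_le_mul_of_nonneg_right hdual (N_nonneg Nadd Nsmul d)
      · -- affine formula for g
        intro s h1 h2
        rw [hg]
        simp only
        rw [haff s h1 h2]
        rw [Finset.mul_sum]
        rw [← Finset.sum_add_distrib]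
        apply Finset.sum_congr rfl
        intro j _
        simp only [Pi.add_apply, Pi.smul_apply, smul_eq_mul]
        ring
    · exact ⟨0, fun h => absurd h ht⟩
  choose sl hsl using key2
  have hderiv : ∀ t ∈ Set.Ico (0:ℝ) 1, HasDerivWithinAt g (sl t) (Set.Ici t) t := by
    intro t ht
    obtain ⟨_, δ, hδ, haff⟩ := hsl t ⟨ht.1, ht.2⟩
    have h1 : HasDerivWithinAt (fun s => g t + (s - t) * sl t) (sl t) (Set.Ici t) t := by
      have := (((hasDerivAt_id t).sub_const t).mul_const (sl t)).const_add (g t)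
      simpa using this.hasDerivWithinAt
    apply h1.congr_of_eventuallyEq ?_ (by simp)
    have hmem : Set.Icc t (t + δ) ∈ nhdsWithin t (Set.Ici t) := by
      apply mem_nhdsWithin.2
      refine ⟨Set.Iio (t + δ), isOpen_Iio, by simp [hδ], ?_⟩
      rintro s ⟨hs1, hs2⟩
      exact ⟨hs2, le_of_lt hs1⟩
    exact Filter.eventuallyEq_of_mem hmem (fun s hs => haff s hs.1 hs.2)
  have hcont : ContinuousOn g (Set.Icc (0:ℝ) 1) := by
    apply Continuous.continuousOn
    apply continuous_finset_sum
    intro j _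
    apply continuous_const.mul
    have hγc : Continuous γ := by
      apply continuous_const.add
      exact continuous_id.smul continuous_const
    exact ((continuous_apply j).comp ((layerOut_continuous p A b m).comp hγc))
  have hbound : ∀ t ∈ Set.Ico (0:ℝ) 1, ‖sl t‖ ≤ L * N d := by
    intro t ht
    rw [Real.norm_eq_abs]
    exact (hsl t ⟨ht.1, ht.2⟩).1
  have := norm_image_sub_le_of_norm_deriv_right_le_segment hcont hderiv hbound 1
    (by constructor <;> norm_num)
  have hg1 : g 1 = F y := by
    rw [hF]
    have : γ 1 = y := by
      ext j
      simp [hγ, hd]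
    rw [hg]; simp only; rw [this]
  have hg0 : g 0 = F x := by
    rw [hF]
    have : γ 0 = x := by
      ext j
      simp [hγ]
    rw [hg]; simp only; rw [this]
  rw [hg1, hg0, Real.norm_eq_abs] at this
  calc |F y - F x| ≤ L * N d * (1 - 0) := this
    _ = L * N d := by ring
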